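/- Independence theorem for algebraic independence over arbitrary sets in the generic L-structure, structural form: let C, A, B, C′ be L-structures with distinguished embeddings of C into each of A, B, C′. Suppose D_AB is an L-structure generated by embedded copies of A and B (compatibly over C) whose underlying sets intersect exactly in the image of C; D_AC is an L-structure generated by embedded copies of A and C′ over C intersecting exactly in the image of C; and D_BC is an L-structure generated by embedded copies of B and C′ over C intersecting exactly in the image of C. Then there exist an L-structure E and L-embeddings i_AB : D_AB → E, i_AC : D_AC → E, i_BC : D_BC → E such that i_AB and i_AC agree on the respective copies of A, i_AB and i_BC agree on the respective copies of B, i_AC and i_BC agree on the respective copies of C′ (in particular all three agree on C), and the image under i_AB of the copy of A intersects the image of D_BC exactly in the image of C. -/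

import Mathlib

open FirstOrder FirstOrder.Language

universe u v w

/-- A flat formula in the variables `V`: either `R(z̄)` (`pos = true`), `¬ R(z̄)`
(`pos = false`), or `f(z̄) = z'`.  Constant symbols are `0`-ary function symbols. -/
inductive FlatFormula (L : FirstOrder.Language.{v, w}) (V : Type u) where
  | rel {n : ℕ} (R : L.Relations n) (z : Fin n → V) (pos : Bool) : FlatFormula L V
  | func {n : ℕ} (f : L.Functions n) (z : Fin n → V) (z' : V) : FlatFormula L V

/-- Realization of a flat formula in an `L`-structure `M` under an assignment `v : V → M`. -/
def FlatFormula.Realize {L : FirstOrder.Language.{v, w}} {V : Type u} {M : Type*}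
    [L.Structure M] (v : V → M) : FlatFormula L V → Prop
  | .rel R z pos => (Structure.RelMap R (fun i => v (z i)) ↔ pos = true)
  | .func f z z' => Structure.funMap f (fun i => v (z i)) = v z'

/-- A flat diagram (a set of flat formulas) is consistent if no relation instance occurs both
positively and negatively, and each function symbol is assigned at most one value on each
tuple of variables. -/
def FlatConsistent {L : FirstOrder.Language.{v, w}} {V : Type u}
    (Δ : Set (FlatFormula L V)) : Prop :=
  (∀ {n : ℕ} (R : L.Relations n) (z : Fin n → V),
      ¬ (FlatFormula.rel R z true ∈ Δ ∧ FlatFormula.rel R z false ∈ Δ)) ∧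
  (∀ {n : ℕ} (f : L.Functions n) (z : Fin n → V) (z₁ z₂ : V),
      FlatFormula.func f z z₁ ∈ Δ → FlatFormula.func f z z₂ ∈ Δ → z₁ = z₂)

/-- A flat formula mentions a variable on the right of `α ⊕ β` (i.e. among the `ȳ`)
in its argument tuple. -/
def FlatFormula.MentionsRight {L : FirstOrder.Language.{v, w}} {α β : Type u} :
    FlatFormula L (α ⊕ β) → Prop
  | .rel _ z _ => ∃ i, (z i).isRight
  | .func _ z _ => ∃ i, (z i).isRight

/-- An extension diagram in `(x̄, ȳ)` (with `x̄` indexed by `Fin m` and `ȳ` by `Fin n`):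
a finite consistent flat diagram each of whose formulas mentions a variable among the `ȳ`. -/
def IsExtensionDiagram {L : FirstOrder.Language.{v, w}} {m n : ℕ}
    (Δ : Set (FlatFormula L (Fin m ⊕ Fin n))) : Prop :=
  Δ.Finite ∧ FlatConsistent Δ ∧ ∀ φ ∈ Δ, φ.MentionsRight

/-- `M ⊨ φ_Δ(ā, b̄)`: all formulas of `Δ` hold under the assignment `Sum.elim a b`, and the
combined tuple `ā b̄` is non-redundant (its entries are pairwise distinct). -/
def RealizesExtDiagram {L : FirstOrder.Language.{v, w}} {m n : ℕ} {M : Type*} [L.Structure M]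
    (Δ : Set (FlatFormula L (Fin m ⊕ Fin n))) (a : Fin m → M) (b : Fin n → M) : Prop :=
  (∀ φ ∈ Δ, FlatFormula.Realize (Sum.elim a b) φ) ∧ Function.Injective (Sum.elim a b)

/-- `M` is a model of `T^∅_L`: `M` satisfies the sentence
`ψ_Δ = ∀ x̄ (δ(x̄) → ∃ ȳ φ_Δ(x̄, ȳ))` for every extension diagram `Δ`. -/
def ModelsTEmpty (L : FirstOrder.Language.{v, w}) (M : Type*) [L.Structure M] : Prop :=
  ∀ (m n : ℕ) (Δ : Set (FlatFormula L (Fin m ⊕ Fin n))), IsExtensionDiagram Δ →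
    ∀ a : Fin m → M, Function.Injective a → ∃ b : Fin n → M, RealizesExtDiagram Δ a b

/-- An `L`-structure `A` is existentially closed if every existential quantifier-free
statement with parameters in `A` which holds in some extension of `A` already holds in `A`. -/
def IsExistentiallyClosed (L : FirstOrder.Language.{v, w}) (A : Type u) [L.Structure A] :
    Prop :=
  ∀ (B : Type (max u v w)) [L.Structure B] (g : A ↪[L] B)
    (m n : ℕ) (φ : L.Formula (Fin m ⊕ Fin n)), φ.IsQF →
      ∀ a : Fin m → A,
        (∃ b : Fin n → B, φ.Realize (Sum.elim (fun i => g (a i)) b)) →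
        ∃ b : Fin n → A, φ.Realize (Sum.elim a b)

/-- A bundled `L`-structure (used to quantify existentially over `L`-structures). -/
structure BStructure (L : FirstOrder.Language.{v, w}) : Type (max (u + 1) v w) where
  carrier : Type u
  [struc : L.Structure carrier]

attribute [instance] BStructure.struc

instance {L : FirstOrder.Language.{v, w}} : CoeSort (BStructure.{u} L) (Type u) :=
  ⟨BStructure.carrier⟩

/-- All variables occurring in a flat formula lie in the set `S`. -/
def FlatFormula.VarsIn {L : FirstOrder.Language.{v, w}} {V : Type u} (S : Set V) :
    FlatFormula L V → Prop
  | .rel _ z _ => ∀ i, z i ∈ S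
  | .func _ z z' => (∀ i, z i ∈ S) ∧ z' ∈ S

/-- `Δ` is a complete consistent flat diagram in the variables `S`. -/
def FlatCompleteOn {L : FirstOrder.Language.{v, w}} {V : Type u} (S : Set V)
    (Δ : Set (FlatFormula L V)) : Prop :=
  FlatConsistent Δ ∧ (∀ φ ∈ Δ, FlatFormula.VarsIn S φ) ∧
  (∀ {n : ℕ} (R : L.Relations n) (z : Fin n → V), (∀ i, z i ∈ S) →
      (FlatFormula.rel R z true ∈ Δ ∨ FlatFormula.rel R z false ∈ Δ)) ∧
  (∀ {n : ℕ} (f : L.Functions n) (z : Fin n → V), (∀ i, z i ∈ S) →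
      ∃ z' ∈ S, FlatFormula.func f z z' ∈ Δ)

section FreeAmalgam

open FirstOrder.Language.Structure
open scoped Classical

variable {L : FirstOrder.Language.{v, w}} {X D1 D2 D3 : Type u}
variable [L.Structure D1] [L.Structure D2] [L.Structure D3]

/-- Interpretation of function symbols on `Option X`: tuples coming entirely from one of the
three pieces are evaluated there; everything else is sent to the default element `none`. -/
noncomputable def amalgFun (ι1 : D1 → X) (ι2 : D2 → X) (ι3 : D3 → X) (n : ℕ)
    (g : L.Functions n) (x : Fin n → Option X) : Option X :=
  if h1 : ∃ d : Fin n → D1, ∀ k, x k = some (ι1 (d k)) then some (ι1 (funMap g h1.choose))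
  else if h2 : ∃ d : Fin n → D2, ∀ k, x k = some (ι2 (d k)) then some (ι2 (funMap g h2.choose))
  else if h3 : ∃ d : Fin n → D3, ∀ k, x k = some (ι3 (d k)) then some (ι3 (funMap g h3.choose))
  else none

/-- Interpretation of relation symbols on `Option X`: a relation holds exactly when the tuple
comes entirely from one of the three pieces and the relation holds there. -/
def amalgRel (ι1 : D1 → X) (ι2 : D2 → X) (ι3 : D3 → X) (n : ℕ)
    (r : L.Relations n) (x : Fin n → Option X) : Prop :=
  (∃ d : Fin n → D1, (∀ k, x k = some (ι1 (d k))) ∧ RelMap r d) ∨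
  (∃ d : Fin n → D2, (∀ k, x k = some (ι2 (d k))) ∧ RelMap r d) ∨
  (∃ d : Fin n → D3, (∀ k, x k = some (ι3 (d k))) ∧ RelMap r d)

/-- The free amalgam structure on `Option X`. -/
noncomputable def amalgStructure (ι1 : D1 → X) (ι2 : D2 → X) (ι3 : D3 → X) :
    L.Structure (Option X) :=
  ⟨fun {n} => amalgFun ι1 ι2 ι3 n, fun {n} => amalgRel ι1 ι2 ι3 n⟩

lemma amalgFun_eq1 (ι1 : D1 → X) (ι2 : D2 → X) (ι3 : D3 → X)
    (inj1 : Function.Injective ι1) {n : ℕ} (g : L.Functions n) (x : Fin n → D1) :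
    amalgFun ι1 ι2 ι3 n g (fun k => some (ι1 (x k))) = some (ι1 (funMap g x)) := by
  have h1 : ∃ d : Fin n → D1, ∀ k, (fun k => some (ι1 (x k))) k = some (ι1 (d k)) :=
    ⟨x, fun _ => rfl⟩
  have hx : h1.choose = x := by
    funext k
    exact (inj1 (Option.some_injective X (h1.choose_spec k))).symm
  unfold amalgFun
  rw [dif_pos h1, hx]

lemma amalgFun_eq2 (ι1 : D1 → X) (ι2 : D2 → X) (ι3 : D3 → X)
    (inj2 : Function.Injective ι2)
    (Hfun12 : ∀ (n : ℕ) (g : L.Functions n) (d1 : Fin n → D1) (d2 : Fin n → D2),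
      (∀ k, ι1 (d1 k) = ι2 (d2 k)) → ι1 (funMap g d1) = ι2 (funMap g d2))
    {n : ℕ} (g : L.Functions n) (x : Fin n → D2) :
    amalgFun ι1 ι2 ι3 n g (fun k => some (ι2 (x k))) = some (ι2 (funMap g x)) := by
  unfold amalgFun
  by_cases h1 : ∃ d : Fin n → D1, ∀ k, (fun k => some (ι2 (x k))) k = some (ι1 (d k))
  · rw [dif_pos h1]
    exact congrArg some (Hfun12 n g h1.choose x
      (fun k => (Option.some_injective X (h1.choose_spec k)).symm))
  · have h2 : ∃ d : Fin n → D2, ∀ k, (fun k => some (ι2 (x k))) k = some (ι2 (d k)) :=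
      ⟨x, fun _ => rfl⟩
    have hx : h2.choose = x := by
      funext k
      exact (inj2 (Option.some_injective X (h2.choose_spec k))).symm
    rw [dif_neg h1, dif_pos h2, hx]

lemma amalgFun_eq3 (ι1 : D1 → X) (ι2 : D2 → X) (ι3 : D3 → X)
    (inj3 : Function.Injective ι3)
    (Hfun13 : ∀ (n : ℕ) (g : L.Functions n) (d1 : Fin n → D1) (d3 : Fin n → D3),
      (∀ k, ι1 (d1 k) = ι3 (d3 k)) → ι1 (funMap g d1) = ι3 (funMap g d3))
    (Hfun23 : ∀ (n : ℕ) (g : L.Functions n) (d2 : Fin n → D2) (d3 : Fin n → D3),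
      (∀ k, ι2 (d2 k) = ι3 (d3 k)) → ι2 (funMap g d2) = ι3 (funMap g d3))
    {n : ℕ} (g : L.Functions n) (x : Fin n → D3) :
    amalgFun ι1 ι2 ι3 n g (fun k => some (ι3 (x k))) = some (ι3 (funMap g x)) := by
  unfold amalgFun
  by_cases h1 : ∃ d : Fin n → D1, ∀ k, (fun k => some (ι3 (x k))) k = some (ι1 (d k))
  · rw [dif_pos h1]
    exact congrArg some (Hfun13 n g h1.choose x
      (fun k => (Option.some_injective X (h1.choose_spec k)).symm))
  · rw [dif_neg h1]
    by_cases h2 : ∃ d : Fin n → D2, ∀ k, (fun k => some (ι3 (x k))) k = some (ι2 (d k))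
    · rw [dif_pos h2]
      exact congrArg some (Hfun23 n g h2.choose x
        (fun k => (Option.some_injective X (h2.choose_spec k)).symm))
    · have h3 : ∃ d : Fin n → D3, ∀ k, (fun k => some (ι3 (x k))) k = some (ι3 (d k)) :=
        ⟨x, fun _ => rfl⟩
      have hx : h3.choose = x := by
        funext k
        exact (inj3 (Option.some_injective X (h3.choose_spec k))).symm
      rw [dif_neg h2, dif_pos h3, hx]

lemma amalgRel_iff1 (ι1 : D1 → X) (ι2 : D2 → X) (ι3 : D3 → X)
    (inj1 : Function.Injective ι1)
    (Hrel12 : ∀ (n : ℕ) (r : L.Relations n) (d1 : Fin n → D1) (d2 : Fin n → D2),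
      (∀ k, ι1 (d1 k) = ι2 (d2 k)) → (RelMap r d1 ↔ RelMap r d2))
    (Hrel13 : ∀ (n : ℕ) (r : L.Relations n) (d1 : Fin n → D1) (d3 : Fin n → D3),
      (∀ k, ι1 (d1 k) = ι3 (d3 k)) → (RelMap r d1 ↔ RelMap r d3))
    {n : ℕ} (r : L.Relations n) (x : Fin n → D1) :
    amalgRel ι1 ι2 ι3 n r (fun k => some (ι1 (x k))) ↔ RelMap r x := by
  constructor
  · rintro (⟨d, hd, hr⟩ | ⟨d, hd, hr⟩ | ⟨d, hd, hr⟩)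
    · have : d = x := funext fun k => (inj1 (Option.some_injective X (hd k))).symm
      exact this ▸ hr
    · exact (Hrel12 n r x d (fun k => Option.some_injective X (hd k))).mpr hr
    · exact (Hrel13 n r x d (fun k => Option.some_injective X (hd k))).mpr hr
  · intro h
    exact Or.inl ⟨x, fun _ => rfl, h⟩

lemma amalgRel_iff2 (ι1 : D1 → X) (ι2 : D2 → X) (ι3 : D3 → X)
    (inj2 : Function.Injective ι2)
    (Hrel12 : ∀ (n : ℕ) (r : L.Relations n) (d1 : Fin n → D1) (d2 : Fin n → D2),
      (∀ k, ι1 (d1 k) = ι2 (d2 k)) → (RelMap r d1 ↔ RelMap r d2))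
    (Hrel23 : ∀ (n : ℕ) (r : L.Relations n) (d2 : Fin n → D2) (d3 : Fin n → D3),
      (∀ k, ι2 (d2 k) = ι3 (d3 k)) → (RelMap r d2 ↔ RelMap r d3))
    {n : ℕ} (r : L.Relations n) (x : Fin n → D2) :
    amalgRel ι1 ι2 ι3 n r (fun k => some (ι2 (x k))) ↔ RelMap r x := by
  constructor
  · rintro (⟨d, hd, hr⟩ | ⟨d, hd, hr⟩ | ⟨d, hd, hr⟩)
    · exact (Hrel12 n r d x (fun k => (Option.some_injective X (hd k)).symm)).mp hr
    · have : d = x := funext fun k => (inj2 (Option.some_injective X (hd k))).symm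
      exact this ▸ hr
    · exact (Hrel23 n r x d (fun k => Option.some_injective X (hd k))).mpr hr
  · intro h
    exact Or.inr (Or.inl ⟨x, fun _ => rfl, h⟩)

lemma amalgRel_iff3 (ι1 : D1 → X) (ι2 : D2 → X) (ι3 : D3 → X)
    (inj3 : Function.Injective ι3)
    (Hrel13 : ∀ (n : ℕ) (r : L.Relations n) (d1 : Fin n → D1) (d3 : Fin n → D3),
      (∀ k, ι1 (d1 k) = ι3 (d3 k)) → (RelMap r d1 ↔ RelMap r d3))
    (Hrel23 : ∀ (n : ℕ) (r : L.Relations n) (d2 : Fin n → D2) (d3 : Fin n → D3),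
      (∀ k, ι2 (d2 k) = ι3 (d3 k)) → (RelMap r d2 ↔ RelMap r d3))
    {n : ℕ} (r : L.Relations n) (x : Fin n → D3) :
    amalgRel ι1 ι2 ι3 n r (fun k => some (ι3 (x k))) ↔ RelMap r x := by
  constructor
  · rintro (⟨d, hd, hr⟩ | ⟨d, hd, hr⟩ | ⟨d, hd, hr⟩)
    · exact (Hrel13 n r d x (fun k => (Option.some_injective X (hd k)).symm)).mp hr
    · exact (Hrel23 n r d x (fun k => (Option.some_injective X (hd k)).symm)).mp hr
    · have : d = x := funext fun k => (inj3 (Option.some_injective X (hd k))).symm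
      exact this ▸ hr
  · intro h
    exact Or.inr (Or.inr ⟨x, fun _ => rfl, h⟩)

/-- Existence of the free amalgam of three structures mapped compatibly into a set `X`. -/
theorem amalg_exists (ι1 : D1 → X) (ι2 : D2 → X) (ι3 : D3 → X)
    (inj1 : Function.Injective ι1) (inj2 : Function.Injective ι2)
    (inj3 : Function.Injective ι3)
    (Hfun12 : ∀ (n : ℕ) (g : L.Functions n) (d1 : Fin n → D1) (d2 : Fin n → D2),
      (∀ k, ι1 (d1 k) = ι2 (d2 k)) → ι1 (funMap g d1) = ι2 (funMap g d2))
    (Hfun13 : ∀ (n : ℕ) (g : L.Functions n) (d1 : Fin n → D1) (d3 : Fin n → D3),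
      (∀ k, ι1 (d1 k) = ι3 (d3 k)) → ι1 (funMap g d1) = ι3 (funMap g d3))
    (Hfun23 : ∀ (n : ℕ) (g : L.Functions n) (d2 : Fin n → D2) (d3 : Fin n → D3),
      (∀ k, ι2 (d2 k) = ι3 (d3 k)) → ι2 (funMap g d2) = ι3 (funMap g d3))
    (Hrel12 : ∀ (n : ℕ) (r : L.Relations n) (d1 : Fin n → D1) (d2 : Fin n → D2),
      (∀ k, ι1 (d1 k) = ι2 (d2 k)) → (RelMap r d1 ↔ RelMap r d2))
    (Hrel13 : ∀ (n : ℕ) (r : L.Relations n) (d1 : Fin n → D1) (d3 : Fin n → D3),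
      (∀ k, ι1 (d1 k) = ι3 (d3 k)) → (RelMap r d1 ↔ RelMap r d3))
    (Hrel23 : ∀ (n : ℕ) (r : L.Relations n) (d2 : Fin n → D2) (d3 : Fin n → D3),
      (∀ k, ι2 (d2 k) = ι3 (d3 k)) → (RelMap r d2 ↔ RelMap r d3)) :
    ∃ (E : BStructure.{u} L) (κ1 : D1 ↪[L] E) (κ2 : D2 ↪[L] E) (κ3 : D3 ↪[L] E)
      (e : X → E), Function.Injective e ∧ (∀ d, κ1 d = e (ι1 d)) ∧
      (∀ d, κ2 d = e (ι2 d)) ∧ (∀ d, κ3 d = e (ι3 d)) := by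
  letI S : L.Structure (Option X) := amalgStructure ι1 ι2 ι3
  refine ⟨⟨Option X⟩,
    ⟨⟨fun d => some (ι1 d), fun _ _ h => ?_⟩, fun {n} g x => ?_, fun {n} r x => ?_⟩,
    ⟨⟨fun d => some (ι2 d), fun _ _ h => ?_⟩, fun {n} g x => ?_, fun {n} r x => ?_⟩,
    ⟨⟨fun d => some (ι3 d), fun _ _ h => ?_⟩, fun {n} g x => ?_, fun {n} r x => ?_⟩,
    some, fun _ _ h => Option.some_injective X h, fun _ => rfl, fun _ => rfl, fun _ => rfl⟩
  · exact inj1 (Option.some_injective X h)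
  · exact (amalgFun_eq1 ι1 ι2 ι3 inj1 g x).symm
  · exact amalgRel_iff1 ι1 ι2 ι3 inj1 Hrel12 Hrel13 r x
  · exact inj2 (Option.some_injective X h)
  · exact (amalgFun_eq2 ι1 ι2 ι3 inj2 Hfun12 g x).symm
  · exact amalgRel_iff2 ι1 ι2 ι3 inj2 Hrel12 Hrel23 r x
  · exact inj3 (Option.some_injective X h)
  · exact (amalgFun_eq3 ι1 ι2 ι3 inj3 Hfun13 Hfun23 g x).symm
  · exact amalgRel_iff3 ι1 ι2 ι3 inj3 Hrel13 Hrel23 r x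

end FreeAmalgam
section Gluing

open FirstOrder.Language.Structure
open scoped Classical

variable {L : FirstOrder.Language.{v, w}} {C A B C' DAB DAC DBC : Type u}
variable [L.Structure C] [L.Structure A] [L.Structure B] [L.Structure C']
variable [L.Structure DAB] [L.Structure DAC] [L.Structure DBC]
variable (eA : C ↪[L] A) (eB : C ↪[L] B) (eC : C ↪[L] C')
variable (jA : A ↪[L] DAB) (jB : B ↪[L] DAB) (kA : A ↪[L] DAC) (kC : C' ↪[L] DAC)
variable (lB : B ↪[L] DBC) (lC : C' ↪[L] DBC)

/-- The glued set: `DAB` together with the parts of `DAC` and `DBC` not already present. -/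
def GX : Type u :=
  DAB ⊕ (({y : DAC // ¬ ∃ a, kA a = y}) ⊕ ({z : DBC // (¬ ∃ b, lB b = z) ∧ ¬ ∃ c', lC c' = z}))

attribute [reducible] GX

/-- The inclusion of `DAC` into the glued set. -/
noncomputable def iota2 (y : DAC) : GX (DAB := DAB) kA lB lC :=
  if h : ∃ a, kA a = y then Sum.inl (jA h.choose) else Sum.inr (Sum.inl ⟨y, h⟩)

/-- The inclusion of `DBC` into the glued set. -/
noncomputable def iota3 (z : DBC) : GX (DAB := DAB) kA lB lC :=
  if hb : ∃ b, lB b = z then Sum.inl (jB hb.choose)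
  else if hc : ∃ c', lC c' = z then iota2 jA kA lB lC (kC hc.choose)
  else Sum.inr (Sum.inr ⟨z, hb, hc⟩)

lemma iota2_kA (a : A) : iota2 jA kA lB lC (kA a) = Sum.inl (jA a) := by
  unfold iota2
  have h : ∃ a', kA a' = kA a := ⟨a, rfl⟩
  rw [dif_pos h, kA.injective h.choose_spec]

lemma iota2_inj : Function.Injective (iota2 jA kA lB lC) := by
  intro y1 y2 h
  unfold iota2 at h
  by_cases h1 : ∃ a, kA a = y1 <;> by_cases h2 : ∃ a, kA a = y2
  · rw [dif_pos h1, dif_pos h2] at h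
    have hc : h1.choose = h2.choose := jA.injective (Sum.inl_injective h)
    rw [← h1.choose_spec, ← h2.choose_spec, hc]
  · rw [dif_pos h1, dif_neg h2] at h
    unfold GX at h
    simp at h
  · rw [dif_neg h1, dif_pos h2] at h
    unfold GX at h
    simp at h
  · rw [dif_neg h1, dif_neg h2] at h
    unfold GX at h
    simpa using h

lemma iota2_eq_inl {y : DAC} {d : DAB} (h : iota2 jA kA lB lC y = Sum.inl d) :
    ∃ a, y = kA a ∧ d = jA a := by
  unfold iota2 at h
  by_cases hr : ∃ a, kA a = y
  · rw [dif_pos hr] at h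
    exact ⟨hr.choose, hr.choose_spec.symm, (Sum.inl_injective h).symm⟩
  · rw [dif_neg hr] at h
    unfold GX at h
    simp at h

lemma mem_range_kA (hk : ∀ c, kA (eA c) = kC (eC c))
    (hkint : Set.range ⇑kA ∩ Set.range ⇑kC = Set.range (fun c => kA (eA c)))
    {c' : C'} (hmem : ∃ a, kA a = kC c') : ∃ c, c' = eC c := by
  have h : kC c' ∈ Set.range (fun c => kA (eA c)) := by
    rw [← hkint]; exact ⟨hmem, ⟨c', rfl⟩⟩
  obtain ⟨c, hc⟩ := h
  have hc2 : kA (eA c) = kC c' := hc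
  rw [hk c] at hc2
  exact ⟨c, (kC.injective hc2).symm⟩

lemma iota3_lB (b : B) : iota3 jA jB kA kC lB lC (lB b) = Sum.inl (jB b) := by
  unfold iota3
  have h : ∃ b', lB b' = lB b := ⟨b, rfl⟩
  rw [dif_pos h, lB.injective h.choose_spec]

lemma iota3_lC (hj : ∀ c, jA (eA c) = jB (eB c)) (hk : ∀ c, kA (eA c) = kC (eC c))
    (hl : ∀ c, lB (eB c) = lC (eC c))
    (hlint : Set.range ⇑lB ∩ Set.range ⇑lC = Set.range (fun c => lB (eB c)))
    (c' : C') : iota3 jA jB kA kC lB lC (lC c') = iota2 jA kA lB lC (kC c') := by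
  unfold iota3
  by_cases hb : ∃ b, lB b = lC c'
  · rw [dif_pos hb]
    have hspec := hb.choose_spec
    have h1 : lB hb.choose ∈ Set.range (fun c => lB (eB c)) := by
      rw [← hlint]; exact ⟨⟨hb.choose, rfl⟩, ⟨c', hspec.symm⟩⟩
    obtain ⟨c, hc1⟩ := h1
    have hc1' : lB (eB c) = lB hb.choose := hc1
    have hbc : hb.choose = eB c := lB.injective hc1'.symm
    have hcc : c' = eC c := by
      apply lC.injective
      rw [← hspec, hbc, hl c]
    rw [hbc, hcc, ← hj c, ← hk c, iota2_kA]
  · have hc : ∃ c'', lC c'' = lC c' := ⟨c', rfl⟩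
    rw [dif_neg hb, dif_pos hc, lC.injective hc.choose_spec]

lemma iota3_eq_inl (hk : ∀ c, kA (eA c) = kC (eC c)) (hl : ∀ c, lB (eB c) = lC (eC c))
    (hkint : Set.range ⇑kA ∩ Set.range ⇑kC = Set.range (fun c => kA (eA c)))
    {z : DBC} {d : DAB} (h : iota3 jA jB kA kC lB lC z = Sum.inl d) :
    ∃ b, z = lB b ∧ d = jB b := by
  unfold iota3 at h
  by_cases hb : ∃ b, lB b = z
  · rw [dif_pos hb] at h
    exact ⟨hb.choose, hb.choose_spec.symm, (Sum.inl_injective h).symm⟩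
  · rw [dif_neg hb] at h
    by_cases hc : ∃ c', lC c' = z
    · rw [dif_pos hc] at h
      obtain ⟨a, ha1, _⟩ := iota2_eq_inl jA kA lB lC h
      obtain ⟨c, hc'⟩ := mem_range_kA eA eC kA kC hk hkint ⟨a, ha1.symm⟩
      exact absurd ⟨eB c, by rw [hl c, ← hc', hc.choose_spec]⟩ hb
    · rw [dif_neg hc] at h
      unfold GX at h
      simp at h

lemma iota3_inj (hj : ∀ c, jA (eA c) = jB (eB c)) (hk : ∀ c, kA (eA c) = kC (eC c))
    (hl : ∀ c, lB (eB c) = lC (eC c))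
    (hkint : Set.range ⇑kA ∩ Set.range ⇑kC = Set.range (fun c => kA (eA c)))
    (hlint : Set.range ⇑lB ∩ Set.range ⇑lC = Set.range (fun c => lB (eB c))) :
    Function.Injective (iota3 jA jB kA kC lB lC) := by
  intro z1 z2 h
  by_cases hb1 : ∃ b, lB b = z1
  · obtain ⟨b, rfl⟩ := hb1
    rw [iota3_lB] at h
    obtain ⟨b', h1, h2⟩ := iota3_eq_inl eA eB eC jA jB kA kC lB lC hk hl hkint h.symm
    rw [h1, jB.injective h2]
  · by_cases hb2 : ∃ b, lB b = z2
    · obtain ⟨b, rfl⟩ := hb2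
      rw [iota3_lB] at h
      obtain ⟨b', h1, h2⟩ := iota3_eq_inl eA eB eC jA jB kA kC lB lC hk hl hkint h
      rw [h1, jB.injective h2]
    · by_cases hc1 : ∃ c', lC c' = z1
      · obtain ⟨c1, rfl⟩ := hc1
        rw [iota3_lC eA eB eC jA jB kA kC lB lC hj hk hl hlint] at h
        by_cases hc2 : ∃ c', lC c' = z2
        · obtain ⟨c2, rfl⟩ := hc2
          rw [iota3_lC eA eB eC jA jB kA kC lB lC hj hk hl hlint] at h
          rw [kC.injective (iota2_inj jA kA lB lC h)]
        · rw [iota3, dif_neg hb2, dif_neg hc2] at h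
          unfold iota2 at h
          by_cases hr : ∃ a, kA a = kC c1
          · rw [dif_pos hr] at h
            unfold GX at h
            simp at h
          · rw [dif_neg hr] at h
            unfold GX at h
            simp at h
      · by_cases hc2 : ∃ c', lC c' = z2
        · obtain ⟨c2, rfl⟩ := hc2
          rw [iota3_lC eA eB eC jA jB kA kC lB lC hj hk hl hlint] at h
          rw [iota3, dif_neg hb1, dif_neg hc1] at h
          unfold iota2 at h
          by_cases hr : ∃ a, kA a = kC c2
          · rw [dif_pos hr] at h
            unfold GX at h
            simp at h
          · rw [dif_neg hr] at h
            unfold GX at h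
            simp at h
        · rw [iota3, dif_neg hb1, dif_neg hc1, iota3, dif_neg hb2, dif_neg hc2] at h
          unfold GX at h
          simpa using h

lemma iota2_eq_iota3 (hj : ∀ c, jA (eA c) = jB (eB c)) (hk : ∀ c, kA (eA c) = kC (eC c))
    (hl : ∀ c, lB (eB c) = lC (eC c))
    (hjint : Set.range ⇑jA ∩ Set.range ⇑jB = Set.range (fun c => jA (eA c)))
    (hlint : Set.range ⇑lB ∩ Set.range ⇑lC = Set.range (fun c => lB (eB c)))
    {y : DAC} {z : DBC} (h : iota2 jA kA lB lC y = iota3 jA jB kA kC lB lC z) :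
    ∃ c', y = kC c' ∧ z = lC c' := by
  by_cases hc : ∃ c', lC c' = z
  · obtain ⟨c', rfl⟩ := hc
    rw [iota3_lC eA eB eC jA jB kA kC lB lC hj hk hl hlint] at h
    exact ⟨c', iota2_inj jA kA lB lC h, rfl⟩
  · by_cases hb : ∃ b, lB b = z
    · obtain ⟨b, rfl⟩ := hb
      rw [iota3_lB] at h
      obtain ⟨a, h1, h2⟩ := iota2_eq_inl jA kA lB lC h
      have hmem : jA a ∈ Set.range (fun c => jA (eA c)) := by
        rw [← hjint]; exact ⟨⟨a, rfl⟩, ⟨b, h2⟩⟩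
      obtain ⟨c, hc'⟩ := hmem
      have hc'' : jA (eA c) = jA a := hc'
      have hab : b = eB c := by
        apply jB.injective
        rw [h2, ← hc'']
        exact hj c
      refine ⟨eC c, ?_, ?_⟩
      · rw [h1, ← jA.injective hc'', hk c]
      · rw [hab, hl c]
    · rw [iota3, dif_neg hb, dif_neg hc] at h
      unfold iota2 at h
      by_cases hr : ∃ a, kA a = y
      · rw [dif_pos hr] at h
        unfold GX at h
        simp at h
      · rw [dif_neg hr] at h
        unfold GX at h
        simp at h

end Gluing
/-- Structural form of the independence theorem for algebraic
independence over arbitrary sets in the generic `L`-structure. -/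
theorem generic_structure_independence_theorem (L : FirstOrder.Language.{v, w})
    (C A B C' DAB DAC DBC : Type u)
    [L.Structure C] [L.Structure A] [L.Structure B] [L.Structure C']
    [L.Structure DAB] [L.Structure DAC] [L.Structure DBC]
    (eA : C ↪[L] A) (eB : C ↪[L] B) (eC : C ↪[L] C')
    -- `DAB` is generated by compatibly embedded copies of `A` and `B` over `C`,
    -- intersecting exactly in the image of `C`:
    (jA : A ↪[L] DAB) (jB : B ↪[L] DAB)
    (hj : ∀ c, jA (eA c) = jB (eB c))
    (hjgen : Substructure.closure L (Set.range ⇑jA ∪ Set.range ⇑jB) = ⊤)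
    (hjint : Set.range ⇑jA ∩ Set.range ⇑jB = Set.range (fun c => jA (eA c)))
    -- `DAC` is generated by compatibly embedded copies of `A` and `C'` over `C`,
    -- intersecting exactly in the image of `C`:
    (kA : A ↪[L] DAC) (kC : C' ↪[L] DAC)
    (hk : ∀ c, kA (eA c) = kC (eC c))
    (hkgen : Substructure.closure L (Set.range ⇑kA ∪ Set.range ⇑kC) = ⊤)
    (hkint : Set.range ⇑kA ∩ Set.range ⇑kC = Set.range (fun c => kA (eA c)))
    -- `DBC` is generated by compatibly embedded copies of `B` and `C'` over `C`,
    -- intersecting exactly in the image of `C`: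
    (lB : B ↪[L] DBC) (lC : C' ↪[L] DBC)
    (hl : ∀ c, lB (eB c) = lC (eC c))
    (hlgen : Substructure.closure L (Set.range ⇑lB ∪ Set.range ⇑lC) = ⊤)
    (hlint : Set.range ⇑lB ∩ Set.range ⇑lC = Set.range (fun c => lB (eB c))) :
    ∃ (E : BStructure.{u} L) (iAB : DAB ↪[L] E) (iAC : DAC ↪[L] E) (iBC : DBC ↪[L] E),
      (∀ x, iAB (jA x) = iAC (kA x)) ∧
      (∀ x, iAB (jB x) = iBC (lB x)) ∧
      (∀ x, iAC (kC x) = iBC (lC x)) ∧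
      (⇑iAB '' Set.range ⇑jA) ∩ Set.range ⇑iBC =
        ⇑iAB '' Set.range (fun c => jA (eA c)) := by
  classical
  have Hfun12 : ∀ (n : ℕ) (g : L.Functions n) (d1 : Fin n → DAB) (d2 : Fin n → DAC),
      (∀ k, (Sum.inl (d1 k) : GX (DAB := DAB) kA lB lC) = iota2 jA kA lB lC (d2 k)) →
      (Sum.inl (Structure.funMap g d1) : GX (DAB := DAB) kA lB lC) =
        iota2 jA kA lB lC (Structure.funMap g d2) := by
    intro n g d1 d2 hkk
    choose a h2 h1 using fun k => iota2_eq_inl jA kA lB lC (hkk k).symm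
    rw [funext h1, funext h2,
      show Structure.funMap g (fun k => jA (a k)) = jA (Structure.funMap g a) from
        (jA.map_fun g a).symm,
      show Structure.funMap g (fun k => kA (a k)) = kA (Structure.funMap g a) from
        (kA.map_fun g a).symm, iota2_kA]
  have Hrel12 : ∀ (n : ℕ) (r : L.Relations n) (d1 : Fin n → DAB) (d2 : Fin n → DAC),
      (∀ k, (Sum.inl (d1 k) : GX (DAB := DAB) kA lB lC) = iota2 jA kA lB lC (d2 k)) →
      (Structure.RelMap r d1 ↔ Structure.RelMap r d2) := by
    intro n r d1 d2 hkk
    choose a h2 h1 using fun k => iota2_eq_inl jA kA lB lC (hkk k).symm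
    rw [funext h1, funext h2]
    exact (jA.map_rel r a).trans (kA.map_rel r a).symm
  have Hfun13 : ∀ (n : ℕ) (g : L.Functions n) (d1 : Fin n → DAB) (d3 : Fin n → DBC),
      (∀ k, (Sum.inl (d1 k) : GX (DAB := DAB) kA lB lC) = iota3 jA jB kA kC lB lC (d3 k)) →
      (Sum.inl (Structure.funMap g d1) : GX (DAB := DAB) kA lB lC) =
        iota3 jA jB kA kC lB lC (Structure.funMap g d3) := by
    intro n g d1 d3 hkk
    choose b h3 h1 using fun k =>
      iota3_eq_inl eA eB eC jA jB kA kC lB lC hk hl hkint (hkk k).symm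
    rw [funext h1, funext h3,
      show Structure.funMap g (fun k => jB (b k)) = jB (Structure.funMap g b) from
        (jB.map_fun g b).symm,
      show Structure.funMap g (fun k => lB (b k)) = lB (Structure.funMap g b) from
        (lB.map_fun g b).symm, iota3_lB]
  have Hrel13 : ∀ (n : ℕ) (r : L.Relations n) (d1 : Fin n → DAB) (d3 : Fin n → DBC),
      (∀ k, (Sum.inl (d1 k) : GX (DAB := DAB) kA lB lC) = iota3 jA jB kA kC lB lC (d3 k)) →
      (Structure.RelMap r d1 ↔ Structure.RelMap r d3) := by
    intro n r d1 d3 hkk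
    choose b h3 h1 using fun k =>
      iota3_eq_inl eA eB eC jA jB kA kC lB lC hk hl hkint (hkk k).symm
    rw [funext h1, funext h3]
    exact (jB.map_rel r b).trans (lB.map_rel r b).symm
  have Hfun23 : ∀ (n : ℕ) (g : L.Functions n) (d2 : Fin n → DAC) (d3 : Fin n → DBC),
      (∀ k, iota2 jA kA lB lC (d2 k) = iota3 jA jB kA kC lB lC (d3 k)) →
      iota2 jA kA lB lC (Structure.funMap g d2) =
        iota3 jA jB kA kC lB lC (Structure.funMap g d3) := by
    intro n g d2 d3 hkk
    choose c h2 h3 using fun k =>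
      iota2_eq_iota3 eA eB eC jA jB kA kC lB lC hj hk hl hjint hlint (hkk k)
    rw [funext h2, funext h3,
      show Structure.funMap g (fun k => kC (c k)) = kC (Structure.funMap g c) from
        (kC.map_fun g c).symm,
      show Structure.funMap g (fun k => lC (c k)) = lC (Structure.funMap g c) from
        (lC.map_fun g c).symm,
      iota3_lC eA eB eC jA jB kA kC lB lC hj hk hl hlint]
  have Hrel23 : ∀ (n : ℕ) (r : L.Relations n) (d2 : Fin n → DAC) (d3 : Fin n → DBC),
      (∀ k, iota2 jA kA lB lC (d2 k) = iota3 jA jB kA kC lB lC (d3 k)) →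
      (Structure.RelMap r d2 ↔ Structure.RelMap r d3) := by
    intro n r d2 d3 hkk
    choose c h2 h3 using fun k =>
      iota2_eq_iota3 eA eB eC jA jB kA kC lB lC hj hk hl hjint hlint (hkk k)
    rw [funext h2, funext h3]
    exact (kC.map_rel r c).trans (lC.map_rel r c).symm
  obtain ⟨E, κ1, κ2, κ3, e, einj, hκ1, hκ2, hκ3⟩ :=
    amalg_exists (Sum.inl : DAB → GX (DAB := DAB) kA lB lC)
      (iota2 jA kA lB lC) (iota3 jA jB kA kC lB lC)
      Sum.inl_injective (iota2_inj jA kA lB lC)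
      (iota3_inj eA eB eC jA jB kA kC lB lC hj hk hl hkint hlint)
      Hfun12 Hfun13 Hfun23 Hrel12 Hrel13 Hrel23
  refine ⟨E, κ1, κ2, κ3, fun x => ?_, fun x => ?_, fun x => ?_, ?_⟩
  · rw [hκ1 (jA x), hκ2 (kA x), iota2_kA]
  · rw [hκ1 (jB x), hκ3 (lB x), iota3_lB]
  · rw [hκ2 (kC x), hκ3 (lC x), iota3_lC eA eB eC jA jB kA kC lB lC hj hk hl hlint]
  · ext x
    constructor
    · rintro ⟨⟨y, ⟨a, rfl⟩, rfl⟩, ⟨z, hz⟩⟩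
      have h' : iota3 jA jB kA kC lB lC z = Sum.inl (jA a) :=
        einj (by rw [← hκ3 z, hz]; exact hκ1 (jA a))
      obtain ⟨b, _, hb2⟩ := iota3_eq_inl eA eB eC jA jB kA kC lB lC hk hl hkint h'
      have hmem : jA a ∈ Set.range (fun c => jA (eA c)) := by
        rw [← hjint]; exact ⟨⟨a, rfl⟩, ⟨b, hb2.symm⟩⟩
      obtain ⟨c, hc⟩ := hmem
      have hc' : jA (eA c) = jA a := hc
      exact ⟨jA (eA c), ⟨c, rfl⟩, by rw [hc']⟩
    · rintro ⟨y, ⟨c, hc⟩, hx⟩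
      have hc' : jA (eA c) = y := hc
      subst hc'
      subst hx
      refine ⟨⟨jA (eA c), ⟨eA c, rfl⟩, rfl⟩, ⟨lB (eB c), ?_⟩⟩
      rw [hκ3 (lB (eB c)), hκ1 (jA (eA c)), iota3_lB, hj c]
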